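/- The game-theoretic semantics extends the compositional one on the first-order fragment: for every first-order formula φ over a vocabulary with partially interpreted relation symbols, function symbols and constant symbols, every such partial model 𝔐 and every variable assignment g, the verifier (Eloise) has a winning strategy in the semantic game G(𝔐, g, φ) if and only if 𝔐, g ⊨⁺ φ in the compositional semantics, and the falsifier (Abelard) has a winning strategy in G(𝔐, g, φ) if and only if 𝔐, g ⊨⁻ φ in the compositional semantics. -/

import Mathlib

/-!
First-order logic over partial models: relation symbols are interpreted as partially
defined relations, function symbols as partial functions and constant symbols may be
undefined. We define the compositional semantics `⊨⁺` / `⊨⁻` and the game-theoretic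
semantics (winning strategies of the verifier/falsifier), and state:

STATEMENT 2: the game-theoretic semantics extends the compositional one on the
first-order fragment.
-/

namespace PartialFO

/-- Terms over a vocabulary with (partial) function symbols and constant symbols;
variables, function symbols and constant symbols are indexed by `ℕ`. -/
inductive PTerm where
  | var (x : ℕ)
  | const (c : ℕ)
  | func (f : ℕ) (ts : List PTerm)

/-- First-order formulas: relational atoms, equality atoms, `¬`, `∧`, `∃`. -/
inductive PFormula where
  | rel (R : ℕ) (ts : List PTerm)
  | eq (t₁ t₂ : PTerm)
  | not (φ : PFormula)
  | and (φ ψ : PFormula)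
  | ex (x : ℕ) (φ : PFormula)

/-- A partial model with domain `A`: each relation symbol is interpreted as a
partially defined relation (`some true` = the tuple is in the relation, `some false`
= the tuple is not in the relation, `none` = undefined), each function symbol as a
partial function, and each constant symbol as an element or as undefined. -/
structure PModel (A : Type) where
  rel : ℕ → List A → Option Bool
  func : ℕ → List A → Option A
  const : ℕ → Option A

/-- Partial variable assignments into the domain `A`. -/
abbrev Assign (A : Type) := ℕ → Option A

/-- `g[x ↦ a]`. -/
def Assign.update {A : Type} (g : Assign A) (x : ℕ) (a : A) : Assign A :=
  fun y => if y = x then some a else g y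

variable {A : Type}

/-- `EvalTerm M g t a` : the value `t^{M,g}` is defined and equal to `a`.
A compound term has a value iff all its subterms have values and the partial
function is defined on the resulting tuple. -/
inductive EvalTerm (M : PModel A) (g : Assign A) : PTerm → A → Prop where
  | var {x a} : g x = some a → EvalTerm M g (.var x) a
  | const {c a} : M.const c = some a → EvalTerm M g (.const c) a
  | func {f ts as a} : List.Forall₂ (EvalTerm M g) ts as →
      M.func f as = some a → EvalTerm M g (.func f ts) a

/-- The compositional semantics: `Sat M true g φ` is `M,g ⊨⁺ φ` and
`Sat M false g φ` is `M,g ⊨⁻ φ`, defined by simultaneous recursion. -/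
def Sat (M : PModel A) : Bool → Assign A → PFormula → Prop
  | s, g, .rel R ts => ∃ as, List.Forall₂ (EvalTerm M g) ts as ∧ M.rel R as = some s
  | s, g, .eq t₁ t₂ => ∃ a₁ a₂, EvalTerm M g t₁ a₁ ∧ EvalTerm M g t₂ a₂ ∧
      (if s then a₁ = a₂ else a₁ ≠ a₂)
  | s, g, .not φ => Sat M (!s) g φ
  | true, g, .and φ ψ => Sat M true g φ ∧ Sat M true g ψ
  | false, g, .and φ ψ => Sat M false g φ ∨ Sat M false g ψ
  | true, g, .ex x φ => ∃ a : A, Sat M true (g.update x a) φ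
  | false, g, .ex x φ => ∀ a : A, Sat M false (g.update x a) φ

/-- `GWin M who v g φ` : in the semantic game on the fixed partial model `M`, the
player `who` (`true` = Eloise, `false` = Abelard) has a winning strategy from the
position `(g, φ)`, where Eloise is the current verifier iff `v = true`. The game is
the standard GTS of first-order logic (the verifier chooses at `∃`, the falsifier at
`∧`, negation swaps the roles), with the atomic endgame rules for partial models:
the current verifier wins at a true defined atom, the current falsifier wins at a
false defined atom, and if some term value or the relation is undefined the play
ends with no winner (no constructor applies). -/
inductive GWin (M : PModel A) : Bool → Bool → Assign A → PFormula → Prop where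
  | relTrue {v g R ts as} :
      List.Forall₂ (EvalTerm M g) ts as → M.rel R as = some true →
      GWin M v v g (.rel R ts)
  | relFalse {v g R ts as} :
      List.Forall₂ (EvalTerm M g) ts as → M.rel R as = some false →
      GWin M (!v) v g (.rel R ts)
  | eqTrue {v g t₁ t₂ a₁ a₂} :
      EvalTerm M g t₁ a₁ → EvalTerm M g t₂ a₂ → a₁ = a₂ →
      GWin M v v g (.eq t₁ t₂)
  | eqFalse {v g t₁ t₂ a₁ a₂} :
      EvalTerm M g t₁ a₁ → EvalTerm M g t₂ a₂ → a₁ ≠ a₂ →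
      GWin M (!v) v g (.eq t₁ t₂)
  | not {who v g φ} : GWin M who (!v) g φ → GWin M who v g (.not φ)
  | andVer {who v g φ ψ} : who = v →
      GWin M who v g φ → GWin M who v g ψ → GWin M who v g (.and φ ψ)
  | andFalL {who v g φ ψ} : who = !v →
      GWin M who v g φ → GWin M who v g (.and φ ψ)
  | andFalR {who v g φ ψ} : who = !v →
      GWin M who v g ψ → GWin M who v g (.and φ ψ)
  | exVer {who v g x φ a} : who = v →
      GWin M who v (Assign.update g x a) φ → GWin M who v g (.ex x φ)
  | exFal {who v g x φ} : who = !v →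
      (∀ a : A, GWin M who v (Assign.update g x a) φ) → GWin M who v g (.ex x φ)

end PartialFO

open PartialFO

theorem gwin_iff_sat {A : Type} (M : PModel A) :
    ∀ (φ : PFormula) (g : Assign A) (w v : Bool),
      GWin M w v g φ ↔ Sat M (w == v) g φ := by
  have notbeq : ∀ v : Bool, ((!v) == v) = false := by decide
  intro φ
  induction φ with
  | rel R ts =>
    intro g w v
    simp only [Sat]
    constructor
    · intro h
      cases h with
      | relTrue h1 h2 => exact ⟨_, h1, by simp [h2]⟩
      | relFalse h1 h2 => exact ⟨_, h1, by simp [notbeq, h2]⟩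
    · rintro ⟨as, h1, h2⟩
      cases w <;> cases v <;> simp at h2
      · exact GWin.relTrue h1 h2
      · exact GWin.relFalse (v := true) h1 h2
      · exact GWin.relFalse (v := false) h1 h2
      · exact GWin.relTrue h1 h2
  | eq t₁ t₂ =>
    intro g w v
    simp only [Sat]
    constructor
    · intro h
      cases h with
      | eqTrue h1 h2 h3 => exact ⟨_, _, h1, h2, by simp [h3]⟩
      | eqFalse h1 h2 h3 => exact ⟨_, _, h1, h2, by simp [notbeq, h3]⟩
    · rintro ⟨a₁, a₂, h1, h2, h3⟩
      cases w <;> cases v <;> simp at h3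
      · exact GWin.eqTrue h1 h2 h3
      · exact GWin.eqFalse (v := true) h1 h2 h3
      · exact GWin.eqFalse (v := false) h1 h2 h3
      · exact GWin.eqTrue h1 h2 h3
  | not φ ih =>
    intro g w v
    have hb : (w == !v) = !(w == v) := by cases w <;> cases v <;> rfl
    simp only [Sat]
    constructor
    · intro h
      cases h with
      | not h => simpa [hb] using (ih g w (!v)).mp h
    · intro h
      exact GWin.not ((ih g w (!v)).mpr (by simpa [hb] using h))
  | and φ ψ ihφ ihψ =>
    intro g w v
    constructor
    · intro h
      cases h with
      | andVer hv hφ hψ =>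
        subst hv
        simp only [beq_self_eq_true, Sat]
        exact ⟨by simpa using (ihφ g _ _).mp hφ, by simpa using (ihψ g _ _).mp hψ⟩
      | andFalL hv hφ =>
        subst hv
        simp only [notbeq, Sat]
        exact Or.inl (by simpa [notbeq] using (ihφ g (!v) v).mp hφ)
      | andFalR hv hψ =>
        subst hv
        simp only [notbeq, Sat]
        exact Or.inr (by simpa [notbeq] using (ihψ g (!v) v).mp hψ)
    · intro h
      cases w <;> cases v <;> simp only [Sat, Bool.true_beq, Bool.false_beq, Bool.not_true, Bool.not_false] at h
      · exact GWin.andVer rfl ((ihφ g _ _).mpr (by simpa using h.1))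
          ((ihψ g _ _).mpr (by simpa using h.2))
      · rcases h with h | h
        · exact GWin.andFalL rfl ((ihφ g _ _).mpr (by simpa using h))
        · exact GWin.andFalR rfl ((ihψ g _ _).mpr (by simpa using h))
      · rcases h with h | h
        · exact GWin.andFalL rfl ((ihφ g _ _).mpr (by simpa using h))
        · exact GWin.andFalR rfl ((ihψ g _ _).mpr (by simpa using h))
      · exact GWin.andVer rfl ((ihφ g _ _).mpr (by simpa using h.1))
          ((ihψ g _ _).mpr (by simpa using h.2))
  | ex x φ ih =>
    intro g w v
    constructor
    · intro h
      cases h with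
      | exVer hv hφ =>
        subst hv
        simp only [beq_self_eq_true, Sat]
        exact ⟨_, by simpa using (ih _ _ _).mp hφ⟩
      | exFal hv hφ =>
        subst hv
        simp only [notbeq, Sat]
        exact fun a => by simpa [notbeq] using (ih _ (!v) v).mp (hφ a)
    · intro h
      cases w <;> cases v <;> simp only [Sat, Bool.true_beq, Bool.false_beq, Bool.not_true, Bool.not_false] at h
      · obtain ⟨a, h⟩ := h
        exact GWin.exVer rfl ((ih _ _ _).mpr (by simpa using h))
      · exact GWin.exFal rfl fun a => (ih _ _ _).mpr (by simpa using h a)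
      · exact GWin.exFal rfl fun a => (ih _ _ _).mpr (by simpa using h a)
      · obtain ⟨a, h⟩ := h
        exact GWin.exVer rfl ((ih _ _ _).mpr (by simpa using h))

/-- The game-theoretic semantics extends the compositional one on
the first-order fragment: for every first-order formula `φ` over a vocabulary with
partially interpreted relation, function and constant symbols, every partial model
`M` and every assignment `g`, the verifier Eloise has a winning strategy in the game
`G(M, g, φ)` iff `M,g ⊨⁺ φ` compositionally, and the falsifier Abelard has a winning
strategy in `G(M, g, φ)` iff `M,g ⊨⁻ φ` compositionally. -/
theorem gts_extends_compositional {A : Type} (M : PModel A) (g : Assign A)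
    (φ : PFormula) :
    (GWin M true true g φ ↔ Sat M true g φ) ∧
    (GWin M false true g φ ↔ Sat M false g φ) := by
  exact ⟨gwin_iff_sat M φ g true true, gwin_iff_sat M φ g false true⟩
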